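/- Let φ be a 3-CNF formula and let V_φ be the 1-VASS with disequality tests constructed from φ as described. Then: (i) for every u ∈ {0,1,…,P−1}, the configuration (s_0,u) is bounded if and only if the assignment val_u satisfies φ; and (ii) the configuration (s_0,u) is unbounded for every u ∈ ℕ if and only if φ is unsatisfiable. -/
import Mathlib


namespace VASSPaper

/-- A 1-VASS with disequality tests: states `Q`, transition relation `delta`,
integer weights `w`, and for each state a cofinite set `D q ⊆ ℕ` of allowed counter values. -/
structure OneVASS (Q : Type) where
  delta : Q → Q → Prop
  w : Q → Q → ℤ
  D : Q → Set ℕ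
  cofinite : ∀ q, (D q)ᶜ.Finite

variable {Q : Type}

/-- A path is a nonempty sequence of states joined by transitions. -/
def IsPath (V : OneVASS Q) : List Q → Prop
  | [] => False
  | [_] => True
  | a :: b :: l => V.delta a b ∧ IsPath V (b :: l)

/-- The weight of a path: the sum of the weights of its transitions. -/
def pathWeight (V : OneVASS Q) (π : List Q) : ℤ :=
  (List.zipWith V.w π π.tail).sum

/-- The counter value at position `i` of the run over `π` starting with counter `z`. -/
def counterAt (V : OneVASS Q) (z : ℕ) (π : List Q) (i : ℕ) : ℤ :=
  (z : ℤ) + pathWeight V (π.take (i + 1))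

/-- `π` lifts to a run from counter value `z`: all counter values stay nonnegative. -/
def IsRun (V : OneVASS Q) (π : List Q) (z : ℕ) : Prop :=
  IsPath V π ∧ ∀ i, i < π.length → 0 ≤ counterAt V z π i

/-- A valid run additionally respects all disequality guards. -/
def IsValidRun (V : OneVASS Q) (π : List Q) (z : ℕ) : Prop :=
  IsRun V π z ∧ ∀ i, ∀ h : i < π.length, (counterAt V z π i).toNat ∈ V.D (π.get ⟨i, h⟩)

/-- `π` goes from configuration `c` to configuration `c'`. -/
def RunFromTo (V : OneVASS Q) (π : List Q) (c c' : Q × ℕ) : Prop :=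
  π.head? = some c.1 ∧ π.getLast? = some c'.1 ∧ (c'.2 : ℤ) = (c.2 : ℤ) + pathWeight V π

/-- `c'` is reachable from `c` by a valid run. -/
def Reaches (V : OneVASS Q) (c c' : Q × ℕ) : Prop :=
  ∃ π, IsValidRun V π c.2 ∧ RunFromTo V π c c'

/-- A configuration is unbounded if infinitely many configurations are reachable from it. -/
def Unbounded (V : OneVASS Q) (c : Q × ℕ) : Prop :=
  {c' | Reaches V c c'}.Infinite

/-- `(s,0)` covers the state `t`. -/
def Covers (V : OneVASS Q) (s t : Q) : Prop :=
  ∃ z, Reaches V (s, 0) (t, z)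

/-- Every state has at most one disequality guard. -/
def SingleGuard (V : OneVASS Q) : Prop :=
  ∀ q, V.D q = Set.univ ∨ ∃ g : ℕ, V.D q = {g}ᶜ

/-- The minimum weight of a (possibly empty) prefix of `π`. -/
def pmin (V : OneVASS Q) (π : List Q) : ℤ :=
  ((List.range (π.length + 1)).map fun i => pathWeight V (π.take i)).foldr min 0

/-- The maximum weight of a (possibly empty) suffix of `π`. -/
def smax (V : OneVASS Q) (π : List Q) : ℤ :=
  ((List.range (π.length + 1)).map fun i => pathWeight V (π.drop i)).foldr max 0

/-- A cycle on `q`: a path with at least one transition starting and ending at `q`. -/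
def IsCycleOn (V : OneVASS Q) (π : List Q) (q : Q) : Prop :=
  IsPath V π ∧ 2 ≤ π.length ∧ π.head? = some q ∧ π.getLast? = some q

/-- A simple cycle on `q`. -/
def IsSimpleCycleOn (V : OneVASS Q) (π : List Q) (q : Q) : Prop :=
  IsCycleOn V π q ∧ π.dropLast.Nodup

/-- The set of states lying on a positive-weight simple cycle. -/
def Qplus (V : OneVASS Q) : Set Q :=
  {q | ∃ π, IsSimpleCycleOn V π q ∧ 0 < pathWeight V π}

/-- `γ` is a valid choice of cycles: for each `q ∈ Q₊`, `γ q` is a simple positive cycle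
on `q` whose `pmin` is maximal among all positive-weight simple cycles on `q`. -/
def GammaChoice (V : OneVASS Q) (γ : Q → List Q) : Prop :=
  ∀ q ∈ Qplus V,
    IsSimpleCycleOn V (γ q) q ∧ 0 < pathWeight V (γ q) ∧
      ∀ π, IsSimpleCycleOn V π q → 0 < pathWeight V π → pmin V π ≤ pmin V (γ q)

/-- `Conf₊`: configurations `(q,z)` with `q ∈ Q₊` and `z + pmin (γ q) ≥ 0`. -/
def ConfPlus (V : OneVASS Q) (γ : Q → List Q) : Set (Q × ℕ) :=
  {c | c.1 ∈ Qplus V ∧ 0 ≤ (c.2 : ℤ) + pmin V (γ c.1)}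

/-- `W_q`, the weight of the chosen cycle `γ q`, as a natural number. -/
def Wnat (V : OneVASS Q) (γ : Q → List Q) (q : Q) : ℕ :=
  (pathWeight V (γ q)).toNat

/-- The `q`-residue class of `r` modulo `W_q`. -/
def resClass (V : OneVASS Q) (γ : Q → List Q) (q : Q) (r : ℕ) : Set (Q × ℕ) :=
  {c | c ∈ ConfPlus V γ ∧ c.1 = q ∧ c.2 % Wnat V γ q = r}

/-- `iterCycle π k` is the cycle `π` iterated `k+1` times. -/
def iterCycle (π : List Q) : ℕ → List Q
  | 0 => π
  | k + 1 => iterCycle π k ++ π.tail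

/-- Counter values `z < z'` at state `q` are connected by a valid run iterating `γ q`. -/
def chainLinked (V : OneVASS Q) (γ : Q → List Q) (q : Q) (z z' : ℕ) : Prop :=
  ∃ k, IsValidRun V (iterCycle (γ q) k) z ∧
    (z' : ℤ) = (z : ℤ) + pathWeight V (iterCycle (γ q) k)

/-- Any two configurations of `S` are connected by iterating `γ q`. -/
def ChainCond (V : OneVASS Q) (γ : Q → List Q) (q : Q) (S : Set (Q × ℕ)) : Prop :=
  ∀ c ∈ S, ∀ c' ∈ S, c.2 < c'.2 → chainLinked V γ q c.2 c'.2

/-- A `q`-chain inside the `q`-residue class of `r`: a maximal subset whose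
configurations are pairwise connected by iterating `γ q`. -/
def IsChainIn (V : OneVASS Q) (γ : Q → List Q) (q : Q) (r : ℕ) (C : Set (Q × ℕ)) : Prop :=
  C ⊆ resClass V γ q r ∧ ChainCond V γ q C ∧
    ∀ C', C ⊆ C' → C' ⊆ resClass V γ q r → ChainCond V γ q C' → C' = C

/-- A chain (in some residue class of some state of `Q₊`). -/
def IsChain (V : OneVASS Q) (γ : Q → List Q) (C : Set (Q × ℕ)) : Prop :=
  ∃ q r, q ∈ Qplus V ∧ r < Wnat V γ q ∧ IsChainIn V γ q r C

/-- A set of configurations is bounded if its counter values are bounded. -/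
def chainBounded (C : Set (Q × ℕ)) : Prop :=
  BddAbove (Prod.snd '' C)

/-- A residue class is trivial if it consists of a single unbounded chain. -/
def TrivialClass (V : OneVASS Q) (γ : Q → List Q) (q : Q) (r : ℕ) : Prop :=
  IsChainIn V γ q r (resClass V γ q r) ∧ ¬ chainBounded (resClass V γ q r)

/-- There is a valid run of length `k` (i.e. `k` transitions) from `c` into the set `S`. -/
def RunLenTo (V : OneVASS Q) (c : Q × ℕ) (S : Set (Q × ℕ)) (k : ℕ) : Prop :=
  ∃ π c', c' ∈ S ∧ IsValidRun V π c.2 ∧ RunFromTo V π c c' ∧ π.length = k + 1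

/-- Configurations of `Conf₊ \ Un` whose distance to `Un` is minimal among all
configurations of `Conf₊ \ Un`. -/
def Uprime (V : OneVASS Q) (γ : Q → List Q) (Un : Set (Q × ℕ)) : Set (Q × ℕ) :=
  {c | c ∈ ConfPlus V γ \ Un ∧
    ∃ k, RunLenTo V c Un k ∧
      ∀ c' ∈ ConfPlus V γ \ Un, ∀ j, RunLenTo V c' Un j → k ≤ j}

/-- `S` is downward closed in every chain. -/
def dcClosed (V : OneVASS Q) (γ : Q → List Q) (S : Set (Q × ℕ)) : Prop :=
  ∀ C, IsChain V γ C → ∀ c ∈ S ∩ C, ∀ c' ∈ C, c'.2 ≤ c.2 → c' ∈ S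

/-- The inductive sequence `U_n`: `U_0` is the union of the unbounded chains; `U_{n+1}` is the
smallest superset of `U_n ∪ U'_n` that is downward closed in every chain. -/
def U (V : OneVASS Q) (γ : Q → List Q) : ℕ → Set (Q × ℕ)
  | 0 => ⋃₀ {C | IsChain V γ C ∧ ¬ chainBounded C}
  | n + 1 => ⋂₀ {S | U V γ n ∪ Uprime V γ (U V γ n) ⊆ S ∧ dcClosed V γ S}

/-- `C` is an `n`-active bounded chain in the `q`-residue class of `r`. -/
def nActiveIn (V : OneVASS Q) (γ : Q → List Q) (q : Q) (r : ℕ) (n : ℕ)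
    (C : Set (Q × ℕ)) : Prop :=
  IsChainIn V γ q r C ∧ chainBounded C ∧
    ∃ c ∈ U V γ n ∩ resClass V γ q r, ∃ c' ∈ C, c.2 ≤ c'.2

/-- `δ_n(C)` for a `q`-chain `C`: configurations outside `U_n` whose counter value lies
between two counter values of `C \ U_n`. -/
def deltaC (V : OneVASS Q) (γ : Q → List Q) (n : ℕ) (q : Q) (C : Set (Q × ℕ)) :
    Set (Q × ℕ) :=
  {c | c ∈ ConfPlus V γ ∧ c.1 = q ∧ c ∉ U V γ n ∧
    ∃ z₁ z₂, (q, z₁) ∈ C \ U V γ n ∧ (q, z₂) ∈ C \ U V γ n ∧ z₁ ≤ c.2 ∧ c.2 ≤ z₂}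

/-- `δ_n(R)` for the `q`-residue class `R` of `r`: union of `δ_n(C)` over `n`-active chains. -/
def deltaR (V : OneVASS Q) (γ : Q → List Q) (n : ℕ) (q : Q) (r : ℕ) : Set (Q × ℕ) :=
  {c | ∃ C, nActiveIn V γ q r n C ∧ c ∈ deltaC V γ n q C}

/-- A positive-weight cycle (as a list of states). -/
def IsPosCycle (V : OneVASS Q) (π : List Q) : Prop :=
  2 ≤ π.length ∧ π.head? = π.getLast? ∧ 0 < pathWeight V π

/-- A path is primitive if no proper infix of it is a positive-weight cycle. -/
def Primitive (V : OneVASS Q) (π : List Q) : Prop :=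
  ∀ i l, (π.drop i).take l ≠ π → ¬ IsPosCycle V ((π.drop i).take l)


/-- The `i`-th prime (`nthPrime 0 = 2`). -/
noncomputable def nthPrime (i : ℕ) : ℕ := Nat.nth Nat.Prime i

/-- `P`, the product of the first `m` primes. -/
noncomputable def bigP (m : ℕ) : ℕ := ∏ i : Fin m, nthPrime i

/-- The assignment `val_u`: variable `X_i` is true iff `p_i ∣ u`. -/
def valAt (m : ℕ) (u : ℕ) : Fin m → Prop := fun i => nthPrime i ∣ u

/-- A 3-CNF formula with `m` variables and `n` clauses, each clause mentioning exactly three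
distinct variables `var i 0, var i 1, var i 2` with polarities `pol i j`. -/
structure CnfFormula (m n : ℕ) where
  var : Fin n → Fin 3 → Fin m
  pol : Fin n → Fin 3 → Bool
  distinct : ∀ i : Fin n, Function.Injective (var i)

/-- Satisfaction of a literal by an assignment. -/
def LitSat {m : ℕ} (v : Fin m → Prop) (x : Fin m) : Bool → Prop
  | true => v x
  | false => ¬ v x

/-- Satisfaction of the `i`-th clause. -/
def ClauseSat {m n : ℕ} (φ : CnfFormula m n) (v : Fin m → Prop) (i : Fin n) : Prop :=
  ∃ j : Fin 3, LitSat v (φ.var i j) (φ.pol i j)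

/-- Satisfaction of the whole formula. -/
def Satisfies {m n : ℕ} (φ : CnfFormula m n) (v : Fin m → Prop) : Prop :=
  ∀ i : Fin n, ClauseSat φ v i

/-- `c_i`: the product of the primes of the three variables of clause `i`. -/
noncomputable def clauseWeight {m n : ℕ} (φ : CnfFormula m n) (i : Fin n) : ℕ :=
  ∏ j : Fin 3, nthPrime (φ.var i j)

/-- The 1-VASS with disequality tests of Figure 1: state `none` is `s₀` with `D = ℕ` and a
weight-0 transition to each `s_i`; state `some i` is `s_i`, carrying a self-loop of weight
`c_i` and disequality guards at all `u ∈ [P, P + c_i)` such that `val_u` satisfies `C_i`. -/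
noncomputable def cnfVASS {m n : ℕ} (φ : CnfFormula m n) : OneVASS (Option (Fin n)) where
  delta a b :=
    match a, b with
    | none, some _ => True
    | some i, some j => i = j
    | _, _ => False
  w a b :=
    match a, b with
    | some i, some _ => (clauseWeight φ i : ℤ)
    | _, _ => 0
  D a :=
    match a with
    | none => Set.univ
    | some i =>
        {u | ¬ (bigP m ≤ u ∧ u < bigP m + clauseWeight φ i ∧ ClauseSat φ (valAt m u) i)}
  cofinite := by
    intro a
    match a with
    | none => simp
    | some i =>
        apply Set.Finite.subset (Set.finite_Ico (bigP m) (bigP m + clauseWeight φ i))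
        intro x hx
        simp only [Set.mem_compl_iff, Set.mem_setOf_eq, not_not] at hx
        exact Set.mem_Ico.mpr ⟨hx.1, hx.2.1⟩


section AuxProof

variable {m n : ℕ} (φ : CnfFormula m n)

lemma clauseWeight_pos (i : Fin n) : 0 < clauseWeight φ i :=
  Finset.prod_pos fun j _ => (Nat.prime_nth_prime _).pos

/-- The guard predicate at state `some i`. -/
def GoodV (φ : CnfFormula m n) (i : Fin n) (z : ℕ) : Prop :=
  ¬ (bigP m ≤ z ∧ z < bigP m + clauseWeight φ i ∧ ClauseSat φ (valAt m z) i)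

lemma mem_D_some (i : Fin n) (z : ℕ) : z ∈ (cnfVASS φ).D (some i) ↔ GoodV φ i z := Iff.rfl

lemma clauseSat_add_mul (i : Fin n) (u k : ℕ) :
    ClauseSat φ (valAt m (u + k * clauseWeight φ i)) i ↔ ClauseSat φ (valAt m u) i := by
  refine exists_congr fun j => ?_
  have hd : nthPrime (φ.var i j) ∣ k * clauseWeight φ i :=
    Dvd.dvd.mul_left (Finset.dvd_prod_of_mem _ (Finset.mem_univ j)) k
  have hv : valAt m (u + k * clauseWeight φ i) (φ.var i j) ↔ valAt m u (φ.var i j) := by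
    unfold valAt
    rw [add_comm, Nat.dvd_add_right hd]
  cases φ.pol i j <;> simp [LitSat, hv]

lemma pathWeight_cons_cons (V : OneVASS Q) (a b : Q) (l : List Q) :
    pathWeight V (a :: b :: l) = V.w a b + pathWeight V (b :: l) := rfl

lemma pathWeight_singleton (V : OneVASS Q) (a : Q) : pathWeight V [a] = 0 := rfl

lemma pathWeight_rep (i : Fin n) (t : ℕ) :
    pathWeight (cnfVASS φ) (List.replicate (t + 1) (some i)) = (t : ℤ) * clauseWeight φ i := by
  induction t with
  | zero => simp [pathWeight_singleton]
  | succ t ih =>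
      rw [List.replicate_succ, List.replicate_succ, pathWeight_cons_cons,
        ← List.replicate_succ, ih]
      have hw : (cnfVASS φ).w (some i) (some i) = (clauseWeight φ i : ℤ) := rfl
      rw [hw]; push_cast; ring

lemma pathWeight_noneRep (i : Fin n) (t : ℕ) :
    pathWeight (cnfVASS φ) (none :: List.replicate (t + 1) (some i)) =
      (t : ℤ) * clauseWeight φ i := by
  rw [List.replicate_succ, pathWeight_cons_cons, ← List.replicate_succ, pathWeight_rep]
  have hw : (cnfVASS φ).w none (some i) = 0 := rfl
  rw [hw, zero_add]

lemma isPath_rep (i : Fin n) (t : ℕ) :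
    IsPath (cnfVASS φ) (List.replicate (t + 1) (some i)) := by
  induction t with
  | zero => trivial
  | succ t ih =>
      rw [List.replicate_succ, List.replicate_succ]
      rw [List.replicate_succ] at ih
      exact ⟨rfl, ih⟩

lemma isPath_noneRep (i : Fin n) (k : ℕ) :
    IsPath (cnfVASS φ) (none :: List.replicate (k + 1) (some i)) := by
  rw [List.replicate_succ]
  exact ⟨trivial, by rw [← List.replicate_succ]; exact isPath_rep φ i k⟩

lemma rep_of_path_some (i : Fin n) : ∀ l : List (Option (Fin n)),
    IsPath (cnfVASS φ) (some i :: l) → some i :: l = List.replicate (l.length + 1) (some i)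
  | [], _ => rfl
  | b :: l, h => by
      obtain ⟨hd, hp⟩ := h
      match b, hd with
      | some j, hd =>
          have hij : i = j := hd
          subst hij
          have := rep_of_path_some i l hp
          rw [List.replicate_succ]
          simp only [List.length_cons]
          rw [← this]

lemma path_from_none (π : List (Option (Fin n))) (hp : IsPath (cnfVASS φ) π)
    (hh : π.head? = some none) :
    π = [none] ∨ ∃ i k, π = none :: List.replicate (k + 1) (some i) := by
  match π, hh with
  | none :: l, _ =>
    cases l with
    | nil => exact Or.inl rfl
    | cons b l =>
      obtain ⟨hd, hp2⟩ := hp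
      match b, hd with
      | some i, _ =>
        exact Or.inr ⟨i, l.length, by rw [← rep_of_path_some φ i l hp2]⟩

lemma getLast_noneRep (i : Fin n) (k : ℕ) :
    (none :: List.replicate (k + 1) (some i)).getLast? = some (some i) := by
  rw [List.replicate_succ', ← List.cons_append, List.getLast?_concat]

lemma counterAt_noneRep_zero (i : Fin n) (k u : ℕ) :
    counterAt (cnfVASS φ) u (none :: List.replicate (k + 1) (some i)) 0 = (u : ℤ) := by
  unfold counterAt
  simp [pathWeight_singleton]

lemma counterAt_noneRep (i : Fin n) (k u j : ℕ) (hj : j ≤ k) :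
    counterAt (cnfVASS φ) u (none :: List.replicate (k + 1) (some i)) (j + 1) =
      ((u + j * clauseWeight φ i : ℕ) : ℤ) := by
  unfold counterAt
  rw [List.take_succ_cons, List.take_replicate, min_eq_left (by omega : j + 1 ≤ k + 1),
    pathWeight_noneRep]
  push_cast; ring

lemma validRun_noneRep (i : Fin n) (k u : ℕ) :
    IsValidRun (cnfVASS φ) (none :: List.replicate (k + 1) (some i)) u ↔
      ∀ j ≤ k, GoodV φ i (u + j * clauseWeight φ i) := by
  have hlen : (none :: List.replicate (k + 1) (some i)).length = k + 2 := by simp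
  constructor
  · rintro ⟨_, hguard⟩ j hj
    have hjl : j + 1 < (none :: List.replicate (k + 1) (some i)).length := by omega
    have hget : (none :: List.replicate (k + 1) (some i)).get ⟨j + 1, hjl⟩ = some i := by
      simp [List.get_cons_succ]
    have := hguard (j + 1) hjl
    rw [hget, counterAt_noneRep φ i k u j hj, Int.toNat_natCast] at this
    exact this
  · intro hgood
    refine ⟨⟨isPath_noneRep φ i k, ?_⟩, ?_⟩
    · intro t ht
      rw [hlen] at ht
      match t with
      | 0 => rw [counterAt_noneRep_zero]; positivity
      | j + 1 =>
          rw [counterAt_noneRep φ i k u j (by omega)]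
          positivity
    · intro t ht
      rw [hlen] at ht
      match t, ht with
      | 0, _ =>
          rw [counterAt_noneRep_zero]
          exact Set.mem_univ _
      | j + 1, _ =>
          have hjl : j + 1 < (none :: List.replicate (k + 1) (some i)).length := ht
          have hget : (none :: List.replicate (k + 1) (some i)).get ⟨j + 1, hjl⟩ = some i := by
            simp [List.get_cons_succ]
          rw [hget, counterAt_noneRep φ i k u j (by omega), Int.toNat_natCast]
          exact hgood j (by omega)

lemma reaches_iff (u : ℕ) (c' : Option (Fin n) × ℕ) :
    Reaches (cnfVASS φ) (none, u) c' ↔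
      c' = (none, u) ∨ ∃ i k, (∀ j ≤ k, GoodV φ i (u + j * clauseWeight φ i)) ∧
        c' = (some i, u + k * clauseWeight φ i) := by
  constructor
  · rintro ⟨π, hvalid, hhead, hlast, hz⟩
    rcases path_from_none φ π hvalid.1.1 hhead with rfl | ⟨i, k, rfl⟩
    · left
      have h1 : c'.1 = none := by simpa using hlast.symm
      have h2 : (c'.2 : ℤ) = (u : ℤ) := by simpa [pathWeight_singleton] using hz
      exact Prod.ext h1 (by exact_mod_cast h2)
    · right
      refine ⟨i, k, (validRun_noneRep φ i k u).mp hvalid, ?_⟩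
      have h1 : c'.1 = some i := by
        have := hlast.symm.trans (getLast_noneRep i k)
        simpa using this
      have h2 : (c'.2 : ℤ) = ((u + k * clauseWeight φ i : ℕ) : ℤ) := by
        rw [hz, pathWeight_noneRep]; push_cast; ring
      exact Prod.ext h1 (by exact_mod_cast h2)
  · rintro (rfl | ⟨i, k, hgood, rfl⟩)
    · refine ⟨[none], ⟨⟨trivial, ?_⟩, ?_⟩, rfl, rfl, by simp [pathWeight_singleton]⟩
      · intro t ht
        have ht' : t = 0 := by simp at ht; omega
        subst ht'
        unfold counterAt
        simp [pathWeight_singleton]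
      · intro t ht
        have ht' : t = 0 := by simp at ht; omega
        subst ht'
        exact Set.mem_univ _
    · refine ⟨none :: List.replicate (k + 1) (some i),
        (validRun_noneRep φ i k u).mpr hgood, rfl, getLast_noneRep i k, ?_⟩
      rw [pathWeight_noneRep]; push_cast; ring

lemma unbounded_iff (u : ℕ) :
    Unbounded (cnfVASS φ) (none, u) ↔ ∃ i, ∀ k, GoodV φ i (u + k * clauseWeight φ i) := by
  constructor
  · intro h
    by_contra hc
    push_neg at hc
    choose K hK using hc
    refine h ?_
    apply Set.Finite.subset
      (Set.Finite.union (Set.finite_singleton ((none : Option (Fin n)), u))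
        (Set.finite_iUnion fun i : Fin n =>
          Set.Finite.image (fun k => ((some i : Option (Fin n)), u + k * clauseWeight φ i))
            (Set.finite_Iio (K i))))
    intro c hc'
    rw [Set.mem_setOf_eq, reaches_iff] at hc'
    rcases hc' with rfl | ⟨i, k, hg, rfl⟩
    · exact Or.inl rfl
    · refine Or.inr (Set.mem_iUnion.mpr ⟨i, ⟨k, ?_, rfl⟩⟩)
      by_contra hk
      exact hK i (hg (K i) (by simpa using hk))
  · rintro ⟨i, hi⟩
    refine Set.infinite_of_injective_forall_mem
      (f := fun k : ℕ => ((some i : Option (Fin n)), u + k * clauseWeight φ i)) ?_ ?_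
    · intro a b hab
      have := (Prod.mk.injEq _ _ _ _).mp hab
      have h2 : a * clauseWeight φ i = b * clauseWeight φ i := by omega
      exact Nat.eq_of_mul_eq_mul_right (clauseWeight_pos φ i) h2
    · intro k
      rw [Set.mem_setOf_eq, reaches_iff]
      exact Or.inr ⟨i, k, fun j _ => hi j, rfl⟩

lemma forall_good_of_not_sat {i : Fin n} {u : ℕ} (h : ¬ ClauseSat φ (valAt m u) i) (k : ℕ) :
    GoodV φ i (u + k * clauseWeight φ i) := by
  rintro ⟨-, -, hsat⟩
  exact h ((clauseSat_add_mul φ i u k).mp hsat)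

lemma not_sat_of_forall_good {i : Fin n} {u : ℕ} (hu : u < bigP m + clauseWeight φ i)
    (h : ∀ k, GoodV φ i (u + k * clauseWeight φ i)) : ¬ ClauseSat φ (valAt m u) i := by
  intro hsat
  have hc : 0 < clauseWeight φ i := clauseWeight_pos φ i
  have hex : ∃ k, bigP m ≤ u + k * clauseWeight φ i :=
    ⟨bigP m, le_trans (Nat.le_mul_of_pos_right _ hc) (Nat.le_add_left _ _)⟩
  have h1 : bigP m ≤ u + Nat.find hex * clauseWeight φ i := Nat.find_spec hex
  have h2 : u + Nat.find hex * clauseWeight φ i < bigP m + clauseWeight φ i := by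
    rcases Nat.eq_zero_or_pos (Nat.find hex) with hk | hk
    · rw [hk]; simpa using hu
    · obtain ⟨j, hj⟩ : ∃ j, Nat.find hex = j + 1 :=
        ⟨Nat.find hex - 1, (Nat.succ_pred_eq_of_pos hk).symm⟩
      have hmin := Nat.find_min hex (by omega : j < Nat.find hex)
      push_neg at hmin
      rw [hj, add_mul, one_mul, ← add_assoc]
      exact Nat.add_lt_add_right hmin _
  exact h (Nat.find hex) ⟨h1, h2, (clauseSat_add_mul φ i u _).mpr hsat⟩

lemma satisfies_congr {v v' : Fin m → Prop} (h : ∀ j, v j ↔ v' j) :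
    Satisfies φ v ↔ Satisfies φ v' := by
  refine forall_congr' fun i => exists_congr fun j => ?_
  cases φ.pol i j <;> simp [LitSat, h]

lemma exists_good_u (v : Fin m → Prop) : ∃ u ≤ bigP m, ∀ j, valAt m u j ↔ v j := by
  classical
  refine ⟨∏ j ∈ Finset.univ.filter (fun j => v j), nthPrime (j : ℕ), ?_, ?_⟩
  · exact Finset.prod_le_prod_of_subset_of_one_le' (Finset.filter_subset _ _)
      fun j _ _ => (Nat.prime_nth_prime j).one_lt.le
  · intro j
    constructor
    · intro hdvd
      obtain ⟨a, ha, hpa⟩ :=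
        ((Nat.prime_nth_prime (j : ℕ)).prime.dvd_finset_prod_iff _).mp hdvd
      have heq : nthPrime (j : ℕ) = nthPrime (a : ℕ) :=
        (Nat.prime_dvd_prime_iff_eq (Nat.prime_nth_prime _) (Nat.prime_nth_prime _)).mp hpa
      have hja : (j : ℕ) = (a : ℕ) :=
        Nat.nth_injective Nat.infinite_setOf_prime heq
      have : j = a := Fin.ext hja
      subst this
      exact (Finset.mem_filter.mp ha).2
    · intro hv
      exact Finset.dvd_prod_of_mem _ (Finset.mem_filter.mpr ⟨Finset.mem_univ j, hv⟩)

end AuxProof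

/-- (i) for `u < P`, `(s₀,u)` is bounded iff `val_u` satisfies `φ`;
(ii) `(s₀,u)` is unbounded for all `u` iff `φ` is unsatisfiable. -/
theorem cnf_reduction_correct {m n : ℕ} (φ : CnfFormula m n) :
    (∀ u : ℕ, u < bigP m →
      (¬ Unbounded (cnfVASS φ) (none, u) ↔ Satisfies φ (valAt m u))) ∧
    ((∀ u : ℕ, Unbounded (cnfVASS φ) (none, u)) ↔
      ¬ ∃ v : Fin m → Prop, Satisfies φ v) := by
  have key : ∀ u : ℕ, u ≤ bigP m →
      (¬ Unbounded (cnfVASS φ) (none, u) ↔ Satisfies φ (valAt m u)) := by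
    intro u hu
    rw [unbounded_iff]
    constructor
    · intro h i
      by_contra hns
      exact h ⟨i, forall_good_of_not_sat φ hns⟩
    · rintro hsat ⟨i, hi⟩
      have hcw : 0 < clauseWeight φ i := clauseWeight_pos φ i
      exact not_sat_of_forall_good φ (by omega) hi (hsat i)
  refine ⟨fun u hu => key u hu.le, ?_, ?_⟩
  · rintro hall ⟨v, hv⟩
    obtain ⟨u, hu, hiff⟩ := exists_good_u v
    exact (key u hu).mpr ((satisfies_congr φ hiff).mpr hv) (hall u)
  · intro hunsat u
    rw [unbounded_iff]
    have hns : ¬ Satisfies φ (valAt m u) := fun hs => hunsat ⟨_, hs⟩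
    unfold Satisfies at hns
    push_neg at hns
    obtain ⟨i, hi⟩ := hns
    exact ⟨i, forall_good_of_not_sat φ hi⟩

end VASSPaper
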